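/- arXiv:1406.7495 — 3 statements merged into one kernel-verified Lean document; each statement's English description precedes it below -/
import Mathlib

section
/- Let λ ∈ (0,∞)^A, v ∈ ℤ^A, and define G_v(n) = ∏_{j=1}^A (n^j!/(n^j - v^j)!) · 1_{n^j ≥ v^j} for n ∈ ℕ^A. Then for every function f : ℤ^A → ℝ that vanishes outside ℕ^A and is bounded, ∑_{n ∈ ℕ^A} f(n + v) 𝔭_λ(n) = λ^{-v} ∑_{n ∈ ℕ^A} f(n) G_v(n) 𝔭_λ(n), where λ^v := ∏_j (λ^j)^{v^j}. -/
/-- The multivariate Poisson distribution on `ℕ^A` with parameter `lam`. -/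
noncomputable def poissonPMF {A : ℕ} (lam : Fin A → ℝ) (n : Fin A → ℕ) : ℝ :=
  Real.exp (-(∑ i, lam i)) * ∏ i, lam i ^ n i / (Nat.factorial (n i))

/-- `G_v(n) = ∏_j (n^j!/(n^j - v^j)!) 1_{n^j ≥ v^j}`. -/
noncomputable def Gshift {A : ℕ} (v : Fin A → ℤ) (n : Fin A → ℕ) : ℝ :=
  ∏ j, if v j ≤ (n j : ℤ) then
    (Nat.factorial (n j) : ℝ) / (Nat.factorial ((n j : ℤ) - v j).toNat) else 0

lemma aux_point (A : ℕ) (lam : Fin A → ℝ) (hlam : ∀ j, 0 < lam j) (v : Fin A → ℤ)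
    (n : Fin A → ℕ) (hn : ∀ j, 0 ≤ (n j : ℤ) + v j) :
    (∏ j, lam j ^ (-(v j))) * (Gshift v (fun j => ((n j : ℤ) + v j).toNat) *
      poissonPMF lam (fun j => ((n j : ℤ) + v j).toNat)) = poissonPMF lam n := by
  set m : Fin A → ℕ := fun j => ((n j : ℤ) + v j).toNat with hmdef
  have hm : ∀ j, (m j : ℤ) = (n j : ℤ) + v j := fun j => Int.toNat_of_nonneg (hn j)
  unfold Gshift poissonPMF
  have hG : (∏ j, if v j ≤ (m j : ℤ) then
      ((m j).factorial : ℝ) / (((m j : ℤ) - v j).toNat.factorial) else 0)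
      = ∏ j, ((m j).factorial : ℝ) / ((n j).factorial) := by
    refine Finset.prod_congr rfl fun j _ => ?_
    have h1 := hm j
    rw [if_pos (by omega), show ((m j : ℤ) - v j).toNat = n j by omega]
  rw [hG]
  have key : (∏ j, lam j ^ (-(v j))) * (∏ j, ((m j).factorial : ℝ) / ((n j).factorial))
      * (∏ j, lam j ^ (m j) / ((m j).factorial : ℝ))
      = ∏ j, lam j ^ (n j) / ((n j).factorial : ℝ) := by
    rw [← Finset.prod_mul_distrib, ← Finset.prod_mul_distrib]
    refine Finset.prod_congr rfl fun j _ => ?_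
    have hfac : ((m j).factorial : ℝ) ≠ 0 := Nat.cast_ne_zero.mpr (Nat.factorial_ne_zero _)
    have hpow : lam j ^ (-(v j)) * lam j ^ (m j) = lam j ^ (n j) := by
      rw [← zpow_natCast (lam j) (m j), ← zpow_natCast (lam j) (n j),
        ← zpow_add₀ (hlam j).ne']
      congr 1
      have := hm j; omega
    calc lam j ^ (-(v j)) * (((m j).factorial : ℝ) / ((n j).factorial))
          * (lam j ^ (m j) / ((m j).factorial : ℝ))
        = (lam j ^ (-(v j)) * lam j ^ (m j)) *
            (((m j).factorial : ℝ) / ((m j).factorial) / ((n j).factorial)) := by ring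
      _ = lam j ^ (n j) / ((n j).factorial : ℝ) := by rw [hpow, div_self hfac]; ring
  linear_combination Real.exp (-(∑ i, lam i)) * key

/-- Density of the absolutely continuous part of the image of `𝔭_λ` under the shift
`θ_v`: for `f` bounded and vanishing outside `ℕ^A`,
`𝔭_λ(f ∘ θ_v) = λ^{-v} 𝔭_λ(f · G_v)`. -/
theorem stmt2 (A : ℕ) (lam : Fin A → ℝ) (hlam : ∀ j, 0 < lam j) (v : Fin A → ℤ)
    (f : (Fin A → ℤ) → ℝ) (hbdd : ∃ C, ∀ z, |f z| ≤ C)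
    (hvanish : ∀ z : Fin A → ℤ, ¬ (∀ j, 0 ≤ z j) → f z = 0) :
    ∑' n : Fin A → ℕ, f (fun j => (n j : ℤ) + v j) * poissonPMF lam n
      = (∏ j, lam j ^ (-(v j))) *
        ∑' n : Fin A → ℕ, f (fun j => (n j : ℤ)) * Gshift v n * poissonPMF lam n := by
  classical
  set g1 : (Fin A → ℕ) → ℝ := fun n => f (fun j => (n j : ℤ) + v j) * poissonPMF lam n with hg1
  set g2 : (Fin A → ℕ) → ℝ := fun m =>
    (∏ j, lam j ^ (-(v j))) * (f (fun j => (m j : ℤ)) * Gshift v m * poissonPMF lam m) with hg2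
  have h1 : Function.support g1 ⊆ {n | ∀ j, 0 ≤ (n j : ℤ) + v j} := by
    intro n hn
    by_contra h
    exact hn (by simp [hg1, hvanish _ h])
  have h2 : Function.support g2 ⊆ {m | ∀ j, v j ≤ (m j : ℤ)} := by
    intro m hm
    by_contra h
    simp only [Set.mem_setOf_eq, not_forall, not_le] at h
    obtain ⟨j, hj⟩ := h
    have hz : Gshift v m = 0 :=
      Finset.prod_eq_zero (Finset.mem_univ j) (by rw [if_neg (by omega)])
    exact hm (by simp [hg2, hz])
  let e : ({n : Fin A → ℕ | ∀ j, 0 ≤ (n j : ℤ) + v j} : Set _) ≃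
      ({m : Fin A → ℕ | ∀ j, v j ≤ (m j : ℤ)} : Set _) :=
    { toFun := fun n => ⟨fun j => ((n.1 j : ℤ) + v j).toNat, fun j => by
        simp only [Set.mem_setOf_eq, Int.toNat_of_nonneg (n.2 j)]; omega⟩
      invFun := fun m => ⟨fun j => ((m.1 j : ℤ) - v j).toNat, fun j => by
        have h := m.2 j
        simp only [Set.mem_setOf_eq,
          Int.toNat_of_nonneg (show (0:ℤ) ≤ (m.1 j : ℤ) - v j by omega)]
        omega⟩
      left_inv := fun n => Subtype.ext (funext fun j => by
        have := n.2 j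
        have : (((((n.1 j : ℤ) + v j).toNat : ℤ)) - v j).toNat = n.1 j := by omega
        simpa using this)
      right_inv := fun m => Subtype.ext (funext fun j => by
        have := m.2 j
        have : (((((m.1 j : ℤ) - v j).toNat : ℤ)) + v j).toNat = m.1 j := by omega
        simpa using this) }
  have step : (∑' n : ({n : Fin A → ℕ | ∀ j, 0 ≤ (n j : ℤ) + v j} : Set _), g1 n)
      = ∑' m : ({m : Fin A → ℕ | ∀ j, v j ≤ (m j : ℤ)} : Set _), g2 m := by
    rw [← Equiv.tsum_eq e (fun m => g2 m)]
    refine tsum_congr fun n => ?_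
    obtain ⟨n, hn⟩ := n
    have harg : (fun j => (((((n j : ℤ) + v j).toNat : ℕ)) : ℤ)) = fun j => (n j : ℤ) + v j :=
      funext fun j => Int.toNat_of_nonneg (hn j)
    show g1 n = g2 (fun j => ((n j : ℤ) + v j).toNat)
    simp only [hg1, hg2]
    rw [harg]
    have := aux_point A lam hlam v n hn
    linear_combination (f fun j => (n j : ℤ) + v j) * this.symm
  rw [← tsum_subtype_eq_of_support_subset h1, step,
    tsum_subtype_eq_of_support_subset h2, hg2, ← tsum_mul_left]
end

section
/- Let A be a matrix, ker_ℤ(A) its integer kernel, and suppose a lattice basis {b_1,…,b_l} of ker_ℤ(A) contains an element c̄ all of whose coordinates are strictly positive. Then this basis is a generating set: for every n ∈ ℕ^A and every m ∈ (n + ker_ℤ(A)) ∩ ℕ^A, there is a finite sequence n = w_0, w_1, …, w_K = m with each w_k ∈ ℕ^A and each w_k - w_{k-1} ∈ {±b_1,…,±b_l}. -/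
section PathAux

variable {l A : ℕ}

def IsPath (b : Fin l → Fin A → ℤ) (n m : Fin A → ℕ) : Prop :=
  ∃ (K : ℕ) (w : ℕ → Fin A → ℕ), w 0 = n ∧ w K = m ∧ ∀ k < K, ∃ i : Fin l,
    (∀ j, ((w (k + 1)) j : ℤ) = (w k) j + b i j) ∨
    (∀ j, ((w (k + 1)) j : ℤ) = (w k) j - b i j)

lemma path_refl (b : Fin l → Fin A → ℤ) (n : Fin A → ℕ) : IsPath b n n :=
  ⟨0, fun _ => n, rfl, rfl, fun k hk => absurd hk (by omega)⟩

lemma path_trans {b : Fin l → Fin A → ℤ} {n v m : Fin A → ℕ}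
    (h1 : IsPath b n v) (h2 : IsPath b v m) : IsPath b n m := by
  obtain ⟨K1, w1, hw10, hw1K, hs1⟩ := h1
  obtain ⟨K2, w2, hw20, hw2K, hs2⟩ := h2
  refine ⟨K1 + K2, fun k => if k < K1 then w1 k else w2 (k - K1), ?_, ?_, ?_⟩
  · by_cases h0 : 0 < K1 <;> simp_all <;> omega
  · have : ¬ (K1 + K2 < K1) := by omega
    simp [this, hw2K]
  · intro k hk
    have hle : ∀ k' ≤ K1, (if k' < K1 then w1 k' else w2 (k' - K1)) = w1 k' := by
      intro k' hk'
      rcases lt_or_eq_of_le hk' with h' | h'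
      · simp [h']
      · subst h'; simp [hw20, hw1K]
    have hge : ∀ k' ≥ K1, (if k' < K1 then w1 k' else w2 (k' - K1)) = w2 (k' - K1) := by
      intro k' hk'
      have : ¬ (k' < K1) ∨ K1 = k' := by omega
      rcases this with h' | h'
      · simp [h']
      · subst h'; simp [hw20, hw1K]
    by_cases hk1 : k < K1
    · obtain ⟨i, hi⟩ := hs1 k hk1
      refine ⟨i, ?_⟩
      beta_reduce
      rw [hle k (by omega), hle (k+1) (by omega)]
      exact hi
    · obtain ⟨i, hi⟩ := hs2 (k - K1) (by omega)
      refine ⟨i, ?_⟩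
      beta_reduce
      rw [hge k (by omega), hge (k+1) (by omega)]
      have : k + 1 - K1 = (k - K1) + 1 := by omega
      rw [this]
      exact hi

lemma path_symm {b : Fin l → Fin A → ℤ} {n m : Fin A → ℕ}
    (h1 : IsPath b n m) : IsPath b m n := by
  obtain ⟨K, w, hw0, hwK, hs⟩ := h1
  refine ⟨K, fun k => w (K - k), by simp [hwK], by simp [hw0], ?_⟩
  intro k hk
  obtain ⟨i, hi⟩ := hs (K - (k+1)) (by omega)
  have e1 : K - (k+1) + 1 = K - k := by omega
  rw [e1] at hi
  refine ⟨i, ?_⟩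
  beta_reduce
  rcases hi with hi | hi
  · right; intro j; have := hi j; omega
  · left; intro j; have := hi j; omega

lemma path_single {b : Fin l → Fin A → ℤ} {n m : Fin A → ℕ} (i : Fin l)
    (hi : (∀ j, ((m j : ℤ)) = n j + b i j) ∨ (∀ j, ((m j : ℤ)) = n j - b i j)) :
    IsPath b n m := by
  refine ⟨1, fun k => if k = 0 then n else m, by simp, by simp, ?_⟩
  intro k hk
  have : k = 0 := by omega
  subst this
  exact ⟨i, by simpa using hi⟩

lemma path_mid {b : Fin l → Fin A → ℤ} :
    ∀ (N : ℕ) (z : Fin l → ℤ), (∑ i, (z i).natAbs) = N →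
    ∀ (u v : Fin A → ℕ),
      (∀ j, (∑ i, ((z i).natAbs : ℤ) * ((b i j).natAbs : ℤ)) ≤ u j) →
      (∀ j, (v j : ℤ) = u j + ∑ i, z i * b i j) →
      IsPath b u v := by
  intro N
  induction N with
  | zero =>
    intro z hz u v _ hv
    have hz0 : ∀ i, z i = 0 := by
      intro i
      have := Finset.sum_eq_zero_iff.mp hz i (Finset.mem_univ i)
      omega
    have : v = u := by
      funext j
      have := hv j
      simp [hz0] at this
      omega
    rw [this]
    exact path_refl b u
  | succ N ih =>
    intro z hz u v hu hv
    have : ∃ i, z i ≠ 0 := by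
      by_contra hc
      push_neg at hc
      simp [hc] at hz
    obtain ⟨i, hi⟩ := this
    set ε : ℤ := if 0 < z i then 1 else -1 with hε
    have splitZ : ∀ (f : Fin l → ℤ), ∑ i', f i' = f i + ∑ i' ∈ Finset.univ.erase i, f i' :=
      fun f => (Finset.add_sum_erase _ f (Finset.mem_univ i)).symm
    have splitN : ∀ (f : Fin l → ℕ), ∑ i', f i' = f i + ∑ i' ∈ Finset.univ.erase i, f i' :=
      fun f => (Finset.add_sum_erase _ f (Finset.mem_univ i)).symm
    set z' : Fin l → ℤ := Function.update z i (z i - ε) with hz'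
    have hz'i : z' i = z i - ε := by simp [hz']
    have hz'ne : ∀ i', i' ≠ i → z' i' = z i' := by
      intro i' hi'
      simp [hz', Function.update_of_ne hi']
    have habs : (z' i).natAbs + 1 = (z i).natAbs := by
      rw [hz'i, hε]
      by_cases h : 0 < z i
      · rw [if_pos h]; omega
      · rw [if_neg h]; omega
    have hstep : ∀ j, -((b i j).natAbs : ℤ) ≤ ε * b i j ∧ ε * b i j ≤ ((b i j).natAbs : ℤ) := by
      intro j
      rw [hε]
      by_cases h : 0 < z i
      · rw [if_pos h]; omega
      · rw [if_neg h]; omega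
    -- the new sums
    have hsum' : (∑ i', (z' i').natAbs) = N := by
      have e1 := splitN (fun i' => (z' i').natAbs)
      have e2 := splitN (fun i' => (z i').natAbs)
      have e3 : ∑ i' ∈ Finset.univ.erase i, (z' i').natAbs
          = ∑ i' ∈ Finset.univ.erase i, (z i').natAbs :=
        Finset.sum_congr rfl fun i' hi' => by rw [hz'ne i' (Finset.ne_of_mem_erase hi')]
      simp only [e1, e2, e3] at *
      omega
    have hwsum : ∀ j, (∑ i', ((z' i').natAbs : ℤ) * ((b i' j).natAbs : ℤ))
        = (∑ i', ((z i').natAbs : ℤ) * ((b i' j).natAbs : ℤ)) - ((b i j).natAbs : ℤ) := by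
      intro j
      have e1 := splitZ (fun i' => ((z' i').natAbs : ℤ) * ((b i' j).natAbs : ℤ))
      have e2 := splitZ (fun i' => ((z i').natAbs : ℤ) * ((b i' j).natAbs : ℤ))
      have e3 : ∑ i' ∈ Finset.univ.erase i, ((z' i').natAbs : ℤ) * ((b i' j).natAbs : ℤ)
          = ∑ i' ∈ Finset.univ.erase i, ((z i').natAbs : ℤ) * ((b i' j).natAbs : ℤ) :=
        Finset.sum_congr rfl fun i' hi' => by rw [hz'ne i' (Finset.ne_of_mem_erase hi')]
      have e4 : ((z' i).natAbs : ℤ) * ((b i j).natAbs : ℤ)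
          = ((z i).natAbs : ℤ) * ((b i j).natAbs : ℤ) - ((b i j).natAbs : ℤ) := by
        have : ((z' i).natAbs : ℤ) = ((z i).natAbs : ℤ) - 1 := by omega
        rw [this]; ring
      rw [e1, e2, e3, e4]; ring
    have hcomb : ∀ j, (∑ i', z' i' * b i' j) = (∑ i', z i' * b i' j) - ε * b i j := by
      intro j
      have e1 := splitZ (fun i' => z' i' * b i' j)
      have e2 := splitZ (fun i' => z i' * b i' j)
      have e3 : ∑ i' ∈ Finset.univ.erase i, z' i' * b i' j
          = ∑ i' ∈ Finset.univ.erase i, z i' * b i' j :=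
        Finset.sum_congr rfl fun i' hi' => by rw [hz'ne i' (Finset.ne_of_mem_erase hi')]
      rw [e1, e2, e3, hz'i]; ring
    -- nonnegativity of the new point
    have hbound : ∀ j, ((b i j).natAbs : ℤ) ≤ ∑ i', ((z i').natAbs : ℤ) * ((b i' j).natAbs : ℤ) := by
      intro j
      have h2 : ((z i).natAbs : ℤ) * ((b i j).natAbs : ℤ) ≤
          ∑ i', ((z i').natAbs : ℤ) * ((b i' j).natAbs : ℤ) :=
        Finset.single_le_sum (f := fun i' => ((z i').natAbs : ℤ) * ((b i' j).natAbs : ℤ))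
          (fun i' _ => by positivity) (Finset.mem_univ i)
      have h3 : (1:ℤ) ≤ ((z i).natAbs : ℤ) := by omega
      nlinarith [h2, h3, (by positivity : (0:ℤ) ≤ ((b i j).natAbs : ℤ))]
    have hnonneg : ∀ j, (0:ℤ) ≤ (u j : ℤ) + ε * b i j := by
      intro j
      have h1 := hu j
      have h5 := (hstep j).1
      have h6 := hbound j
      omega
    set u' : Fin A → ℕ := fun j => ((u j : ℤ) + ε * b i j).toNat with hu'
    have hu'cast : ∀ j, ((u' j : ℤ)) = (u j : ℤ) + ε * b i j := by
      intro j
      simp only [hu']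
      exact Int.toNat_of_nonneg (hnonneg j)
    have step1 : IsPath b u u' := by
      apply path_single i
      by_cases h : 0 < z i
      · left; intro j; rw [hu'cast j, hε, if_pos h]; ring
      · right; intro j; rw [hu'cast j, hε, if_neg h]; ring
    have step2 : IsPath b u' v := by
      apply ih z' hsum'
      · intro j
        have := hu j
        have := hwsum j
        have := hu'cast j
        have := (hstep j).1
        omega
      · intro j
        rw [hcomb j, hu'cast j, hv j]
        ring
    exact path_trans step1 step2

lemma path_up {b : Fin l → Fin A → ℤ} (i₀ : Fin l) (hpos : ∀ j, 0 < b i₀ j)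
    (n : Fin A → ℕ) : ∀ t, IsPath b n (fun j => n j + t * (b i₀ j).toNat) := by
  intro t
  induction t with
  | zero => simpa using path_refl b n
  | succ t ih =>
    refine path_trans ih (path_single i₀ (Or.inl fun j => ?_))
    have h2 : ((b i₀ j).toNat : ℤ) = b i₀ j := Int.toNat_of_nonneg (le_of_lt (hpos j))
    show ((n j + (t+1) * (b i₀ j).toNat : ℕ) : ℤ) = ((n j + t * (b i₀ j).toNat : ℕ) : ℤ) + b i₀ j
    push_cast [h2]
    ring

end PathAux

/-- If a lattice basis of `ker_ℤ(A)` contains a vector with all coordinates strictly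
positive, then it is a generating set: any two points of `ℕ^A` whose difference lies in
`ker_ℤ(A)` are joined by a path in `ℕ^A` with steps `±b_i`. -/
theorem stmt6 (d A l : ℕ) (M : Matrix (Fin d) (Fin A) ℝ) (b : Fin l → (Fin A → ℤ))
    (hker : ∀ i, M.mulVec (fun j => (b i j : ℝ)) = 0)
    (hindep : LinearIndependent ℤ b)
    (hspan : ∀ c : Fin A → ℤ, M.mulVec (fun j => (c j : ℝ)) = 0 →
      ∃ z : Fin l → ℤ, c = ∑ i, z i • b i)
    (i₀ : Fin l) (hpos : ∀ j, 0 < b i₀ j)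
    (n m : Fin A → ℕ)
    (h : M.mulVec (fun j => (((m j : ℤ) - (n j : ℤ) : ℤ) : ℝ)) = 0) :
    ∃ (K : ℕ) (w : ℕ → Fin A → ℕ), w 0 = n ∧ w K = m ∧ ∀ k < K, ∃ i : Fin l,
      (∀ j, ((w (k + 1)) j : ℤ) = (w k) j + b i j) ∨
      (∀ j, ((w (k + 1)) j : ℤ) = (w k) j - b i j) := by
  obtain ⟨z, hz⟩ := hspan (fun j => (m j : ℤ) - (n j : ℤ)) h
  have hzj : ∀ j, (m j : ℤ) - (n j : ℤ) = ∑ i, z i * b i j := by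
    intro j
    have := congrFun hz j
    simpa [Finset.sum_apply] using this
  set T : ℕ := ∑ j, ∑ i, (z i).natAbs * (b i j).natAbs with hT
  have hTbig : ∀ j, (∑ i, ((z i).natAbs : ℤ) * ((b i j).natAbs : ℤ)) ≤ (T : ℤ) := by
    intro j
    have h1 : (∑ i, (z i).natAbs * (b i j).natAbs) ≤ T :=
      Finset.single_le_sum (f := fun j => ∑ i, (z i).natAbs * (b i j).natAbs)
        (fun j _ => Nat.zero_le _) (Finset.mem_univ j)
    calc (∑ i, ((z i).natAbs : ℤ) * ((b i j).natAbs : ℤ))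
        = ((∑ i, (z i).natAbs * (b i j).natAbs : ℕ) : ℤ) := by first | (push_cast; ring) | push_cast
      _ ≤ (T : ℤ) := by exact_mod_cast h1
  have htoNat : ∀ j, ((b i₀ j).toNat : ℤ) = b i₀ j := fun j =>
    Int.toNat_of_nonneg (le_of_lt (hpos j))
  have hone : ∀ j, 1 ≤ (b i₀ j).toNat := by
    intro j
    have := hpos j
    omega
  have p1 : IsPath b n (fun j => n j + T * (b i₀ j).toNat) := path_up i₀ hpos n T
  have p3 : IsPath b (fun j => m j + T * (b i₀ j).toNat) m :=
    path_symm (path_up i₀ hpos m T)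
  have p2 : IsPath b (fun j => n j + T * (b i₀ j).toNat)
      (fun j => m j + T * (b i₀ j).toNat) := by
    apply path_mid (∑ i, (z i).natAbs) z rfl
    · intro j
      have h1 := hTbig j
      have h2 : (T : ℤ) ≤ ((n j + T * (b i₀ j).toNat : ℕ) : ℤ) := by
        have := hone j
        push_cast
        nlinarith
      omega
    · intro j
      have := hzj j
      push_cast
      omega
  exact path_trans p1 (path_trans p2 p3)
end

section
/- For the lattice ker_ℤ(A) with 𝒜 = {3,4,5}: for any lattice basis B of ker_ℤ(A), there exists a probability measure ρ on ℕ³ and λ ∈ (0,∞)³ such that ρ satisfies the shift identity ρ(f ∘ θ_c) = λ^{-c} ρ(f · G_c) for all c ∈ B and all f vanishing outside ℕ³, but the density dρ/d𝔭_λ is not constant on the leaves {n : A n = const}. Concretely, with f₀ ∈ {(-3,1,1),(1,-2,1),(2,1,-2)} \ B (choosing w.l.o.g. f₀ = (-3,1,1)) and corresponding n₀ ∈ {(3,0,0),(0,2,0),(0,0,2)}, the measure ρ = ε δ_{n₀} + (1-ε) 𝔭_λ (for 0 < ε < 1) satisfies the identity for all c ∈ B but ρ ∉ ℛ_A(𝔭_λ).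 -/
/-- The mixture `ρ = ε δ_{n₀} + (1-ε) 𝔭_λ`. -/
noncomputable def mixMeasure (lam : Fin 3 → ℝ) (ε : ℝ) (n₀ n : Fin 3 → ℕ) : ℝ :=
  (if n = n₀ then ε else 0) + (1 - ε) * poissonPMF lam n

lemma poissonPMF_pos {A : ℕ} (lam : Fin A → ℝ) (hlam : ∀ j, 0 < lam j) (n : Fin A → ℕ) :
    0 < poissonPMF lam n := by
  unfold poissonPMF
  have : ∀ i, 0 < lam i ^ n i / (Nat.factorial (n i) : ℝ) := fun i =>
    div_pos (pow_pos (hlam i) _) (by exact_mod_cast Nat.factorial_pos _)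
  exact mul_pos (Real.exp_pos _) (Finset.prod_pos fun i _ => this i)

/-- core Poisson shift identity -/
lemma poisson_shift (lam : Fin 3 → ℝ) (hlam : ∀ j, 0 < lam j) (c : Fin 3 → ℤ)
    (f : (Fin 3 → ℤ) → ℝ) (hf0 : ∀ z : Fin 3 → ℤ, ¬ (∀ j, 0 ≤ z j) → f z = 0) :
    ∑' n : Fin 3 → ℕ, f (fun j => (n j : ℤ) + c j) * poissonPMF lam n
      = ∑' n : Fin 3 → ℕ, f (fun j => (n j : ℤ)) *
          ((∏ j, lam j ^ (-(c j))) * Gshift c n * poissonPMF lam n) := by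
  set g : (Fin 3 → ℕ) → ℝ := fun n => f (fun j => (n j : ℤ) + c j) * poissonPMF lam n with hg
  set F : (Fin 3 → ℕ) → ℝ := fun m => f (fun j => (m j : ℤ)) *
      ((∏ j, lam j ^ (-(c j))) * Gshift c m * poissonPMF lam m) with hF
  have hsupp : ∀ n ∈ Function.support g, ∀ j, 0 ≤ (n j : ℤ) + c j := by
    intro n hn j
    by_contra hneg
    apply hn
    have : f (fun j => (n j : ℤ) + c j) = 0 := hf0 _ (by push_neg; exact ⟨j, by omega⟩)
    simp [hg, this]
  refine (tsum_eq_tsum_of_ne_zero_bij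
    (fun x : Function.support g => fun j => ((x.1 j : ℤ) + c j).toNat) ?_ ?_ ?_).symm
  · -- injectivity
    intro x y hxy
    ext j
    have hx := hsupp x.1 x.2 j
    have hy := hsupp y.1 y.2 j
    have h2 : (((x.1 j : ℤ) + c j).toNat) = (((y.1 j : ℤ) + c j).toNat) := congrFun hxy j
    omega
  · -- support F ⊆ range
    rintro m hm
    have hGm : Gshift c m ≠ 0 := by
      intro h0; apply hm; simp [hF, h0]
    have hcm : ∀ j, c j ≤ (m j : ℤ) := by
      intro j
      by_contra hj
      apply hGm
      unfold Gshift
      exact Finset.prod_eq_zero (Finset.mem_univ j) (if_neg hj)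
    have hfm : f (fun j => (m j : ℤ)) ≠ 0 := by
      intro h0; apply hm; simp [hF, h0]
    refine ⟨⟨fun j => ((m j : ℤ) - c j).toNat, ?_⟩, ?_⟩
    · -- in support of g
      have harg : (fun j => ((((m j : ℤ) - c j).toNat : ℤ) + c j)) = fun j => (m j : ℤ) := by
        ext j; have := hcm j; omega
      simp only [hg, Function.mem_support, harg]
      exact mul_ne_zero hfm (poissonPMF_pos lam hlam _).ne'
    · ext j
      show ((((((m j : ℤ) - c j).toNat : ℕ) : ℤ) + c j).toNat) = m j
      have := hcm j; omega
  · -- values agree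
    rintro ⟨n, hn⟩
    set m : Fin 3 → ℕ := fun j => ((n j : ℤ) + c j).toNat with hm
    have hmj : ∀ j, (m j : ℤ) = (n j : ℤ) + c j := by
      intro j; have := hsupp n hn j; simp [hm]; omega
    have harg : (fun j => (m j : ℤ)) = fun j => (n j : ℤ) + c j := by
      ext j; exact hmj j
    show f (fun j => (m j : ℤ)) * ((∏ j, lam j ^ (-(c j))) * Gshift c m * poissonPMF lam m)
      = f (fun j => (n j : ℤ) + c j) * poissonPMF lam n
    rw [harg]
    congr 1
    -- ∏ λ^{-c} * G * p m = p n
    unfold Gshift poissonPMF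
    rw [show (∏ j, lam j ^ (-(c j))) *
        (∏ j, if c j ≤ (m j : ℤ) then (Nat.factorial (m j) : ℝ) /
          (Nat.factorial ((m j : ℤ) - c j).toNat) else 0) *
        (Real.exp (-(∑ i, lam i)) * ∏ i, lam i ^ m i / (Nat.factorial (m i)))
      = Real.exp (-(∑ i, lam i)) * ∏ j, (lam j ^ (-(c j)) *
          ((if c j ≤ (m j : ℤ) then (Nat.factorial (m j) : ℝ) /
            (Nat.factorial ((m j : ℤ) - c j).toNat) else 0) *
          (lam j ^ m j / (Nat.factorial (m j))))) from by
        rw [Finset.prod_mul_distrib, Finset.prod_mul_distrib]; ring]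
    congr 1
    apply Finset.prod_congr rfl
    intro j _
    have hcj : c j ≤ (m j : ℤ) := by have := hmj j; have := hsupp n hn j; omega
    rw [if_pos hcj]
    have hmn : ((m j : ℤ) - c j).toNat = n j := by have := hmj j; omega
    rw [hmn]
    have hfacm : (Nat.factorial (m j) : ℝ) ≠ 0 := by exact_mod_cast (Nat.factorial_pos _).ne'
    have hfacn : (Nat.factorial (n j) : ℝ) ≠ 0 := by exact_mod_cast (Nat.factorial_pos _).ne'
    have hl : lam j ≠ 0 := (hlam j).ne'
    have hzp : lam j ^ (-(c j)) * lam j ^ (m j : ℤ) = lam j ^ (n j : ℤ) := by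
      rw [← zpow_add₀ hl]; congr 1; have := hmj j; omega
    have h1 : lam j ^ (m j) = lam j ^ ((m j : ℤ)) := by rw [zpow_natCast]
    have h2 : lam j ^ (n j) = lam j ^ ((n j : ℤ)) := by rw [zpow_natCast]
    have h3 : lam j ^ ((m j : ℤ)) = lam j ^ ((n j : ℤ)) * lam j ^ (c j) := by
      rw [← zpow_add₀ hl]; congr 1; have := hmj j; omega
    field_simp
    rw [h1, h3, ← h2]
    rw [mul_left_comm, ← zpow_add₀ hl, neg_add_cancel, zpow_zero, mul_one]

lemma shift_case (B : Set (Fin 3 → ℤ)) (lam : Fin 3 → ℝ) (hlam : ∀ j, 0 < lam j)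
    (ε : ℝ) (n₀ : Fin 3 → ℕ)
    (hplus : ∀ c ∈ B, ∃ j, (n₀ j : ℤ) + c j < 0)
    (hminus : ∀ c ∈ B, ∃ j, (n₀ j : ℤ) < c j) :
    ∀ c ∈ B, ∀ f : (Fin 3 → ℤ) → ℝ,
      (∃ C, ∀ z, |f z| ≤ C) → (∀ z : Fin 3 → ℤ, ¬ (∀ j, 0 ≤ z j) → f z = 0) →
      ∑' n : Fin 3 → ℕ, f (fun j => (n j : ℤ) + c j) * mixMeasure lam ε n₀ n
        = (∏ j, lam j ^ (-(c j))) *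
          ∑' n : Fin 3 → ℕ, f (fun j => (n j : ℤ)) * Gshift c n * mixMeasure lam ε n₀ n := by
  intro c hc f _ hf0
  obtain ⟨j₁, hj₁⟩ := hplus c hc
  obtain ⟨j₂, hj₂⟩ := hminus c hc
  have hfn₀ : f (fun j => (n₀ j : ℤ) + c j) = 0 :=
    hf0 _ (by push_neg; exact ⟨j₁, by omega⟩)
  have hGn₀ : Gshift c n₀ = 0 := by
    unfold Gshift
    exact Finset.prod_eq_zero (Finset.mem_univ j₂) (if_neg (by omega))
  set K : ℝ := ∏ j, lam j ^ (-(c j)) with hK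
  calc ∑' n : Fin 3 → ℕ, f (fun j => (n j : ℤ) + c j) * mixMeasure lam ε n₀ n
      = ∑' n : Fin 3 → ℕ, (1 - ε) * (f (fun j => (n j : ℤ) + c j) * poissonPMF lam n) := by
        refine tsum_congr fun n => ?_
        by_cases h : n = n₀
        · subst h; simp [mixMeasure, hfn₀]
        · simp [mixMeasure, h]; ring
    _ = (1 - ε) * ∑' n : Fin 3 → ℕ, f (fun j => (n j : ℤ) + c j) * poissonPMF lam n :=
        tsum_mul_left
    _ = (1 - ε) * ∑' n : Fin 3 → ℕ, f (fun j => (n j : ℤ)) * (K * Gshift c n * poissonPMF lam n) := by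
        rw [poisson_shift lam hlam c f hf0]
    _ = (1 - ε) * ∑' n : Fin 3 → ℕ, K * (f (fun j => (n j : ℤ)) * Gshift c n * poissonPMF lam n) := by
        congr 1; exact tsum_congr fun n => by ring
    _ = K * ((1 - ε) * ∑' n : Fin 3 → ℕ, f (fun j => (n j : ℤ)) * Gshift c n * poissonPMF lam n) := by
        rw [tsum_mul_left]; ring
    _ = K * ∑' n : Fin 3 → ℕ, (1 - ε) * (f (fun j => (n j : ℤ)) * Gshift c n * poissonPMF lam n) := by
        rw [tsum_mul_left]
    _ = K * ∑' n : Fin 3 → ℕ, f (fun j => (n j : ℤ)) * Gshift c n * mixMeasure lam ε n₀ n := by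
        congr 1
        refine tsum_congr fun n => ?_
        by_cases h : n = n₀
        · subst h; simp [mixMeasure, hGn₀]
        · simp [mixMeasure, h]; ring

lemma nonmeas (lam : Fin 3 → ℝ) (hlam : ∀ j, 0 < lam j) (ε : ℝ) (hε : 0 < ε)
    (n₀ n₁ : Fin 3 → ℕ) (hne : n₁ ≠ n₀)
    (hA : 3 * (n₁ 0 : ℤ) + 4 * (n₁ 1 : ℤ) + 5 * (n₁ 2 : ℤ)
        = 3 * (n₀ 0 : ℤ) + 4 * (n₀ 1 : ℤ) + 5 * (n₀ 2 : ℤ)) :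
    ¬ ∃ h : ℤ → ℝ, ∀ n : Fin 3 → ℕ,
      mixMeasure lam ε n₀ n
        = h (3 * (n 0 : ℤ) + 4 * (n 1 : ℤ) + 5 * (n 2 : ℤ)) * poissonPMF lam n := by
  rintro ⟨h, hh⟩
  have e1 := hh n₁
  have e0 := hh n₀
  rw [hA] at e1
  unfold mixMeasure at e1 e0
  rw [if_neg hne] at e1
  rw [if_pos rfl] at e0
  have hp1 := poissonPMF_pos lam hlam n₁
  have hkey : (1 - ε) * poissonPMF lam n₁
      = h (3 * (n₀ 0 : ℤ) + 4 * (n₀ 1 : ℤ) + 5 * (n₀ 2 : ℤ)) * poissonPMF lam n₁ := by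
    linarith
  have hval := mul_right_cancel₀ hp1.ne' hkey
  rw [← hval] at e0
  linarith

lemma choose_n₀ (B : Set (Fin 3 → ℤ))
    (hindep : LinearIndependent ℤ (fun x : B => (x : Fin 3 → ℤ))) :
    (∀ c ∈ B, c ≠ ![(-3), 1, 1] ∧ c ≠ ![3, -1, -1]) ∨
    (∀ c ∈ B, c ≠ ![1, -2, 1] ∧ c ≠ ![(-1), 2, -1]) ∨
    (∀ c ∈ B, c ≠ ![2, 1, -2] ∧ c ≠ ![(-2), -1, 2]) := by
  classical
  by_contra hcon
  push_neg at hcon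
  obtain ⟨⟨a, ha, ha2⟩, ⟨b, hb, hb2⟩, ⟨d, hd, hd2⟩⟩ := hcon
  have ha3 : a = ![(-3), 1, 1] ∨ a = ![3, -1, -1] := by
    by_cases h : a = ![(-3), 1, 1]
    · exact Or.inl h
    · exact Or.inr (ha2 h)
  have hb3 : b = ![1, -2, 1] ∨ b = ![(-1), 2, -1] := by
    by_cases h : b = ![1, -2, 1]
    · exact Or.inl h
    · exact Or.inr (hb2 h)
  have hd3 : d = ![2, 1, -2] ∨ d = ![(-2), -1, 2] := by
    by_cases h : d = ![2, 1, -2]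
    · exact Or.inl h
    · exact Or.inr (hd2 h)
  obtain ⟨s, hs0, hsa⟩ : ∃ s : ℤ, s ≠ 0 ∧ s • a = ![(-3), 1, 1] := by
    rcases ha3 with rfl | rfl
    · exact ⟨1, one_ne_zero, one_smul _ _⟩
    · exact ⟨-1, by norm_num, by funext j; fin_cases j <;> simp⟩
  obtain ⟨t, ht0, htb⟩ : ∃ t : ℤ, t ≠ 0 ∧ t • b = ![1, -2, 1] := by
    rcases hb3 with rfl | rfl
    · exact ⟨1, one_ne_zero, one_smul _ _⟩
    · exact ⟨-1, by norm_num, by funext j; fin_cases j <;> simp⟩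
  obtain ⟨u, hu0, hud⟩ : ∃ u : ℤ, u ≠ 0 ∧ u • d = ![2, 1, -2] := by
    rcases hd3 with rfl | rfl
    · exact ⟨1, one_ne_zero, one_smul _ _⟩
    · exact ⟨-1, by norm_num, by funext j; fin_cases j <;> simp⟩
  have hab : a ≠ b := by
    rcases ha3 with rfl | rfl <;> rcases hb3 with rfl | rfl <;>
      · intro h; have := congrFun h 0; norm_num at this
  have had : a ≠ d := by
    rcases ha3 with rfl | rfl <;> rcases hd3 with rfl | rfl <;>
      · intro h; have := congrFun h 0; norm_num at this
  have hbd : b ≠ d := by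
    rcases hb3 with rfl | rfl <;> rcases hd3 with rfl | rfl <;>
      · intro h; have := congrFun h 0; norm_num at this
  set xa : B := ⟨a, ha⟩
  set xb : B := ⟨b, hb⟩
  set xd : B := ⟨d, hd⟩
  have hxab : xa ≠ xb := fun h => hab (congrArg Subtype.val h)
  have hxad : xa ≠ xd := fun h => had (congrArg Subtype.val h)
  have hxbd : xb ≠ xd := fun h => hbd (congrArg Subtype.val h)
  set g : B → ℤ := fun x => if x = xa then s else if x = xb then t else u
  have hsum : ∑ i ∈ ({xa, xb, xd} : Finset B), g i • (i : Fin 3 → ℤ) = 0 := by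
    rw [Finset.sum_insert (by simp [hxab, hxad]),
        Finset.sum_insert (by simp [hxbd]), Finset.sum_singleton]
    have hga : g xa = s := if_pos rfl
    have hgb : g xb = t := by simp [g, Ne.symm hxab]
    have hgd : g xd = u := by simp [g, Ne.symm hxad, Ne.symm hxbd]
    rw [hga, hgb, hgd]
    show s • a + (t • b + u • d) = 0
    rw [hsa, htb, hud]
    funext j; fin_cases j <;> simp
  have := linearIndependent_iff'.mp hindep {xa, xb, xd} g hsum xa (by simp)
  simp only [g, if_pos rfl] at this
  exact hs0 this


/-- Counterexample for `𝒜 = {3,4,5}`: for any lattice basis `B` of `ker_ℤ(A)`, any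
`λ ∈ (0,∞)³` and any `0 < ε < 1`, there is `n₀ ∈ {(3,0,0),(0,2,0),(0,0,2)}` such that
the mixture `ρ = ε δ_{n₀} + (1-ε) 𝔭_λ` satisfies the shift identity for every `c ∈ B`
but its density with respect to `𝔭_λ` is not `σ(A n)`-measurable. -/
theorem stmt11 (B : Set (Fin 3 → ℤ))
    (hindep : LinearIndependent ℤ (fun x : B => (x : Fin 3 → ℤ)))
    (hker : ∀ c ∈ B, 3 * c 0 + 4 * c 1 + 5 * c 2 = 0)
    (hspan : ∀ c : Fin 3 → ℤ, 3 * c 0 + 4 * c 1 + 5 * c 2 = 0 → c ∈ Submodule.span ℤ B)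
    (lam : Fin 3 → ℝ) (hlam : ∀ j, 0 < lam j) (ε : ℝ) (hε : 0 < ε) (hε1 : ε < 1) :
    ∃ n₀ ∈ ({![3, 0, 0], ![0, 2, 0], ![0, 0, 2]} : Set (Fin 3 → ℕ)),
      (∀ c ∈ B, ∀ f : (Fin 3 → ℤ) → ℝ,
        (∃ C, ∀ z, |f z| ≤ C) → (∀ z : Fin 3 → ℤ, ¬ (∀ j, 0 ≤ z j) → f z = 0) →
        ∑' n : Fin 3 → ℕ, f (fun j => (n j : ℤ) + c j) * mixMeasure lam ε n₀ n
          = (∏ j, lam j ^ (-(c j))) *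
            ∑' n : Fin 3 → ℕ, f (fun j => (n j : ℤ)) * Gshift c n * mixMeasure lam ε n₀ n) ∧
      ¬ ∃ h : ℤ → ℝ, ∀ n : Fin 3 → ℕ,
        mixMeasure lam ε n₀ n
          = h (3 * (n 0 : ℤ) + 4 * (n 1 : ℤ) + 5 * (n 2 : ℤ)) * poissonPMF lam n := by
  have hnz : ∀ c ∈ B, ¬ (c 0 = 0 ∧ c 1 = 0 ∧ c 2 = 0) := by
    intro c hc ⟨h1, h2, h3⟩
    exact hindep.ne_zero ⟨c, hc⟩ (funext fun j => by fin_cases j <;> simp [h1, h2, h3])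
  rcases choose_n₀ B hindep with hB | hB | hB
  · refine ⟨![3, 0, 0], Set.mem_insert _ _, shift_case B lam hlam ε _ ?_ ?_,
      nonmeas lam hlam ε hε _ ![0, 1, 1]
        (fun h => by have := congrFun h 0; simp at this) (by decide)⟩
    · intro c hc
      have hrel := hker c hc
      have h0 := hnz c hc
      have hv : ¬ (c 0 = -3 ∧ c 1 = 1 ∧ c 2 = 1) := by
        intro ⟨h1, h2, h3⟩
        exact (hB c hc).1 (funext fun j => by fin_cases j <;> simp [h1, h2, h3])
      have : (3:ℤ) + c 0 < 0 ∨ (0:ℤ) + c 1 < 0 ∨ (0:ℤ) + c 2 < 0 := by omega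
      rcases this with h | h | h
      exacts [⟨0, by simpa using h⟩, ⟨1, by simpa using h⟩, ⟨2, by simpa using h⟩]
    · intro c hc
      have hrel := hker c hc
      have h0 := hnz c hc
      have hv : ¬ (c 0 = 3 ∧ c 1 = -1 ∧ c 2 = -1) := by
        intro ⟨h1, h2, h3⟩
        exact (hB c hc).2 (funext fun j => by fin_cases j <;> simp [h1, h2, h3])
      have : (3:ℤ) < c 0 ∨ (0:ℤ) < c 1 ∨ (0:ℤ) < c 2 := by omega
      rcases this with h | h | h
      exacts [⟨0, by simpa using h⟩, ⟨1, by simpa using h⟩, ⟨2, by simpa using h⟩]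
  · refine ⟨![0, 2, 0], by simp, shift_case B lam hlam ε _ ?_ ?_,
      nonmeas lam hlam ε hε _ ![1, 0, 1]
        (fun h => by have := congrFun h 0; simp at this) (by decide)⟩
    · intro c hc
      have hrel := hker c hc
      have h0 := hnz c hc
      have hv : ¬ (c 0 = 1 ∧ c 1 = -2 ∧ c 2 = 1) := by
        intro ⟨h1, h2, h3⟩
        exact (hB c hc).1 (funext fun j => by fin_cases j <;> simp [h1, h2, h3])
      have : (0:ℤ) + c 0 < 0 ∨ (2:ℤ) + c 1 < 0 ∨ (0:ℤ) + c 2 < 0 := by omega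
      rcases this with h | h | h
      exacts [⟨0, by simpa using h⟩, ⟨1, by simpa using h⟩, ⟨2, by simpa using h⟩]
    · intro c hc
      have hrel := hker c hc
      have h0 := hnz c hc
      have hv : ¬ (c 0 = -1 ∧ c 1 = 2 ∧ c 2 = -1) := by
        intro ⟨h1, h2, h3⟩
        exact (hB c hc).2 (funext fun j => by fin_cases j <;> simp [h1, h2, h3])
      have : (0:ℤ) < c 0 ∨ (2:ℤ) < c 1 ∨ (0:ℤ) < c 2 := by omega
      rcases this with h | h | h
      exacts [⟨0, by simpa using h⟩, ⟨1, by simpa using h⟩, ⟨2, by simpa using h⟩]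
  · refine ⟨![0, 0, 2], by simp, shift_case B lam hlam ε _ ?_ ?_,
      nonmeas lam hlam ε hε _ ![2, 1, 0]
        (fun h => by have := congrFun h 0; simp at this) (by decide)⟩
    · intro c hc
      have hrel := hker c hc
      have h0 := hnz c hc
      have hv : ¬ (c 0 = 2 ∧ c 1 = 1 ∧ c 2 = -2) := by
        intro ⟨h1, h2, h3⟩
        exact (hB c hc).1 (funext fun j => by fin_cases j <;> simp [h1, h2, h3])
      have : (0:ℤ) + c 0 < 0 ∨ (0:ℤ) + c 1 < 0 ∨ (2:ℤ) + c 2 < 0 := by omega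
      rcases this with h | h | h
      exacts [⟨0, by simpa using h⟩, ⟨1, by simpa using h⟩, ⟨2, by simpa using h⟩]
    · intro c hc
      have hrel := hker c hc
      have h0 := hnz c hc
      have hv : ¬ (c 0 = -2 ∧ c 1 = -1 ∧ c 2 = 2) := by
        intro ⟨h1, h2, h3⟩
        exact (hB c hc).2 (funext fun j => by fin_cases j <;> simp [h1, h2, h3])
      have : (0:ℤ) < c 0 ∨ (0:ℤ) < c 1 ∨ (2:ℤ) < c 2 := by omega
      rcases this with h | h | h
      exacts [⟨0, by simpa using h⟩, ⟨1, by simpa using h⟩, ⟨2, by simpa using h⟩]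
end
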